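/- For integers σ ≥ 2, σ' ≥ 2 and Σ ≥ 2, if gcd(σ − 1, σ' − 1) = Σ − 1, then P_σ ∩ P_{σ'} = P_Σ. -/

import Mathlib

/-- The Riemann–Hurwitz formula `σ - 1 = N (h - 1 + (1/2) Σ (1 - 1/mᵢ))`
as an equality of rational numbers. -/
def RHFormula (σ N h : ℕ) (m : List ℕ) : Prop :=
  (σ : ℚ) - 1 = (N : ℚ) * ((h : ℚ) - 1 + (1 / 2) * (m.map (fun x => 1 - 1 / (x : ℚ))).sum)

/-- `(h; m₁, …, m_r)` is a potential signature for genus `σ`: each `mᵢ ≥ 2` and there is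
a positive integer `N` with `mᵢ ∣ N` for all `i` satisfying the Riemann–Hurwitz formula. -/
def IsPotentialSignature (σ h : ℕ) (m : List ℕ) : Prop :=
  (∀ x ∈ m, 2 ≤ x) ∧ ∃ N : ℕ, 0 < N ∧ (∀ x ∈ m, x ∣ N) ∧ RHFormula σ N h m

/-- The set `P_σ` of potential signatures for genus `σ`, as a set of pairs `(h, [m₁, …, m_r])`. -/
def PotSig (σ : ℕ) : Set (ℕ × List ℕ) := {p | IsPotentialSignature σ p.1 p.2}

/-- The lcm of a list of naturals. -/
def listLcm (m : List ℕ) : ℕ := m.foldr Nat.lcm 1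

lemma listLcm_pos (m : List ℕ) (hm : ∀ x ∈ m, 2 ≤ x) : 0 < listLcm m := by
  induction m with
  | nil => simp [listLcm]
  | cons a l ih =>
    have ha : 2 ≤ a := hm a (by simp)
    have hl := ih (fun x hx => hm x (by simp [hx]))
    simpa [listLcm] using Nat.lcm_pos (by omega) hl

lemma dvd_listLcm {m : List ℕ} {x : ℕ} (hx : x ∈ m) : x ∣ listLcm m := by
  induction m with
  | nil => simp at hx
  | cons a l ih =>
    rcases List.mem_cons.mp hx with rfl | hx
    · exact Nat.dvd_lcm_left _ _
    · exact (ih hx).trans (Nat.dvd_lcm_right _ _)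

lemma listLcm_dvd {m : List ℕ} {N : ℕ} (h : ∀ x ∈ m, x ∣ N) : listLcm m ∣ N := by
  induction m with
  | nil => simpa [listLcm] using one_dvd N
  | cons a l ih =>
    exact Nat.lcm_dvd (h a (by simp)) (ih (fun x hx => h x (by simp [hx])))

/-- Abbreviation for the bracketed factor in the Riemann–Hurwitz formula. -/
noncomputable def Tval (h : ℕ) (m : List ℕ) : ℚ :=
  (h : ℚ) - 1 + (1 / 2) * (m.map (fun x => 1 - 1 / (x : ℚ))).sum

lemma key (h t : ℕ) (m : List ℕ) (hm : ∀ x ∈ m, 2 ≤ x) (ht : 0 < t) :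
    (∃ N : ℕ, 0 < N ∧ (∀ x ∈ m, x ∣ N) ∧ (t : ℚ) = (N : ℚ) * Tval h m) ↔
      0 < (listLcm m : ℚ) * Tval h m ∧
        ((listLcm m : ℚ) * Tval h m).num ∣ (t : ℤ) := by
  set q := (listLcm m : ℚ) * Tval h m with hqdef
  have hL : 0 < listLcm m := listLcm_pos m hm
  have hcop : IsCoprime q.num (q.den : ℤ) := by
    rw [Int.isCoprime_iff_gcd_eq_one, Int.gcd]
    simpa using q.reduced
  have hden : (q.den : ℚ) * q = (q.num : ℚ) := by
    rw [mul_comm]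
    exact_mod_cast Rat.mul_den_eq_num q
  constructor
  · rintro ⟨N, hN, hdvd, heq⟩
    obtain ⟨k, hk⟩ := listLcm_dvd hdvd
    have hk0 : 0 < k := by
      rcases Nat.eq_zero_or_pos k with h0 | h0
      · simp [h0] at hk; omega
      · exact h0
    have heq2 : (t : ℚ) = (k : ℚ) * q := by
      rw [heq, hk, hqdef]; push_cast; ring
    have ht' : (0 : ℚ) < t := by exact_mod_cast ht
    have hk' : (0 : ℚ) < k := by exact_mod_cast hk0
    have hq0 : 0 < q := by nlinarith
    refine ⟨hq0, ?_⟩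
    have h3 : (t : ℚ) * (q.den : ℚ) = (k : ℚ) * (q.num : ℚ) := by
      rw [heq2, mul_assoc, mul_comm q (q.den : ℚ), hden]
    have h4 : (t : ℤ) * (q.den : ℤ) = (k : ℤ) * q.num := by exact_mod_cast h3
    exact hcop.dvd_of_dvd_mul_right ⟨k, by linarith [h4]⟩
  · rintro ⟨hq0, hdvd⟩
    obtain ⟨s, hs⟩ := hdvd
    have hnum : 0 < q.num := Rat.num_pos.mpr hq0
    have hs0 : 0 < s := by
      rcases lt_trichotomy s 0 with h0 | h0 | h0
      · nlinarith [hs, (by exact_mod_cast ht : (0:ℤ) < (t:ℤ))]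
      · simp [h0] at hs; omega
      · exact h0
    obtain ⟨n, rfl⟩ := Int.eq_ofNat_of_zero_le hs0.le
    have hn : 0 < n := by exact_mod_cast hs0
    refine ⟨n * q.den * listLcm m, ?_, ?_, ?_⟩
    · positivity
    · intro x hx
      exact Dvd.dvd.mul_left (dvd_listLcm hx) _
    · have hcast : ((n * q.den * listLcm m : ℕ) : ℚ)
          = (n : ℚ) * (q.den : ℚ) * (listLcm m : ℚ) := by push_cast; ring
      rw [hcast]
      have h5 : (n : ℚ) * (q.den : ℚ) * (listLcm m : ℚ) * Tval h m
          = (n : ℚ) * ((q.den : ℚ) * q) := by rw [hqdef]; ring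
      rw [h5, hden]
      have h6 : (t : ℤ) = q.num * (n : ℤ) := hs
      exact_mod_cast by rw [h6]; push_cast; ring

lemma mem_potSig_iff (σ h : ℕ) (m : List ℕ) (hσ : 2 ≤ σ) :
    (h, m) ∈ PotSig σ ↔ (∀ x ∈ m, 2 ≤ x) ∧ 0 < (listLcm m : ℚ) * Tval h m ∧
      ((listLcm m : ℚ) * Tval h m).num ∣ ((σ - 1 : ℕ) : ℤ) := by
  have hcast : ((σ - 1 : ℕ) : ℚ) = (σ : ℚ) - 1 := by
    push_cast [Nat.cast_sub (by omega : 1 ≤ σ)]; ring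
  constructor
  · rintro ⟨hm, N, hN, hdvd, heq⟩
    refine ⟨hm, ?_⟩
    have := (key h (σ - 1) m hm (by omega)).mp
      ⟨N, hN, hdvd, by rw [hcast]; exact heq⟩
    exact ⟨this.1, this.2⟩
  · rintro ⟨hm, h1, h2⟩
    obtain ⟨N, hN, hdvd, heq⟩ := (key h (σ - 1) m hm (by omega)).mpr ⟨h1, h2⟩
    exact ⟨hm, N, hN, hdvd, by rw [RHFormula, ← hcast]; exact heq⟩

/-- If `gcd(σ - 1, σ' - 1) = Σ - 1`, then `P_σ ∩ P_{σ'} = P_Σ`. -/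
theorem potSig_inter_eq_of_gcd (σ σ' S : ℕ) (hσ : 2 ≤ σ) (hσ' : 2 ≤ σ') (hS : 2 ≤ S)
    (hgcd : Nat.gcd (σ - 1) (σ' - 1) = S - 1) :
    PotSig σ ∩ PotSig σ' = PotSig S := by
  ext ⟨h, m⟩
  rw [Set.mem_inter_iff, mem_potSig_iff σ h m hσ, mem_potSig_iff σ' h m hσ',
    mem_potSig_iff S h m hS]
  constructor
  · rintro ⟨⟨hm, hq, h1⟩, ⟨-, -, h2⟩⟩
    refine ⟨hm, hq, ?_⟩
    have := Int.dvd_coe_gcd h1 h2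
    rwa [Int.gcd_natCast_natCast, hgcd] at this
  · rintro ⟨hm, hq, hd⟩
    have hd' : (((S - 1 : ℕ) : ℤ)) ∣ ((σ - 1 : ℕ) : ℤ) :=
      Int.natCast_dvd_natCast.mpr (hgcd ▸ Nat.gcd_dvd_left _ _)
    have hd'' : (((S - 1 : ℕ) : ℤ)) ∣ ((σ' - 1 : ℕ) : ℤ) :=
      Int.natCast_dvd_natCast.mpr (hgcd ▸ Nat.gcd_dvd_right _ _)
    exact ⟨⟨hm, hq, hd.trans hd'⟩, ⟨hm, hq, hd.trans hd''⟩⟩
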